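/- Let p be a probability distribution on ℤ_+ supported on {y_1,...,y_m} with y_min and y_max its smallest and largest support points. Let dist satisfy the decomposition dist(q_1‖q_2) = t(q_1) + Σ_y ℓ(q_1(y), q_2(y)) where b ↦ ℓ(a,b) is strictly decreasing for a > 0 and ℓ(0,b) = 0. Then for any prior Q on [0,∞) placing positive mass outside [y_min, y_max], there exists a prior Q̃ supported on [y_min, y_max] with dist(p‖f_{Q̃}) < dist(p‖f_Q). Hence any minimizer of Q ↦ dist(p‖f_Q) is supported on [y_min, y_max]. -/

import Mathlib

open MeasureTheory Real

/-- Poisson density with mean `θ` at point `y`. -/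
noncomputable def poissonPdf (θ : ℝ) (y : ℕ) : ℝ :=
  Real.exp (-θ) * θ ^ y / (Nat.factorial y)

/-- Poisson mixture density `f_Q`. -/
noncomputable def mixturePdf (Q : Measure ℝ) (y : ℕ) : ℝ :=
  ∫ θ, poissonPdf θ y ∂Q

lemma poissonPdf_nonneg {θ : ℝ} (hθ : 0 ≤ θ) (y : ℕ) : 0 ≤ poissonPdf θ y := by
  unfold poissonPdf
  positivity

lemma poissonPdf_le_one {θ : ℝ} (hθ : 0 ≤ θ) (y : ℕ) : poissonPdf θ y ≤ 1 := by
  unfold poissonPdf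
  rw [div_le_one (by positivity)]
  have h1 : θ ^ y / (Nat.factorial y : ℝ) ≤ Real.exp θ := by
    calc θ ^ y / (Nat.factorial y : ℝ) ≤ ∑ i ∈ Finset.range (y+1), θ ^ i / (Nat.factorial i : ℝ) := by
          exact Finset.single_le_sum (f := fun i => θ ^ i / (Nat.factorial i : ℝ))
            (fun i _ => by positivity) (Finset.self_mem_range_succ y)
      _ ≤ Real.exp θ := Real.sum_le_exp_of_nonneg hθ _
  calc Real.exp (-θ) * θ ^ y ≤ Real.exp (-θ) * (Real.exp θ * (Nat.factorial y : ℝ)) := by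
        have := (div_le_iff₀ (by positivity : (0:ℝ) < (Nat.factorial y : ℝ))).1 h1
        exact mul_le_mul_of_nonneg_left this (Real.exp_nonneg _)
    _ = 1 * (Nat.factorial y : ℝ) := by rw [← mul_assoc, ← Real.exp_add]; simp
    _ = (Nat.factorial y : ℝ) := one_mul _

lemma measurable_poissonPdf (y : ℕ) : Measurable (fun θ : ℝ => poissonPdf θ y) := by
  unfold poissonPdf
  fun_prop

-- strictly decreasing past M ≥ y
lemma poissonPdf_lt_right {y M : ℕ} (hyM : y ≤ M) {θ : ℝ} (hθ : (M : ℝ) < θ) :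
    poissonPdf θ y < poissonPdf M y := by
  unfold poissonPdf
  apply div_lt_div_of_pos_right ?_ (by positivity)
  rcases Nat.eq_zero_or_pos M with hM | hM
  · subst hM
    interval_cases y
    simp only [pow_zero, mul_one, Nat.cast_zero, neg_zero, Real.exp_zero]
    exact Real.exp_lt_one_iff.2 (by simpa using hθ)
  · have hMr : (1:ℝ) ≤ M := by exact_mod_cast hM
    have hMpos : (0:ℝ) < M := by linarith
    have hθpos : 0 < θ := lt_trans hMpos hθ
    set u : ℝ := θ / M with hu
    have hu1 : 1 < u := (one_lt_div hMpos).2 hθ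
    have hupos : 0 < u := by linarith
    -- u^y ≤ u^M < exp (θ - M)
    have h1 : u ^ y ≤ u ^ M := pow_le_pow_right₀ (le_of_lt hu1) hyM
    have h2 : u < Real.exp (u - 1) := by
      have := Real.add_one_lt_exp (x := u - 1) (by intro h; apply absurd h; intro h'; linarith)
      linarith
    have h3 : u ^ M < Real.exp (u - 1) ^ M :=
      pow_lt_pow_left₀ h2 (le_of_lt hupos) (Nat.pos_of_ne_zero (by omega)).ne'
    have h4 : Real.exp (u - 1) ^ M = Real.exp (θ - M) := by
      rw [← Real.exp_nat_mul]
      congr 1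
      have : (M:ℝ) ≠ 0 := ne_of_gt hMpos
      field_simp [hu]
      rw [hu, mul_sub, mul_div_assoc', mul_div_cancel_left₀ θ this]; ring
    have key : u ^ y < Real.exp (θ - M) := lt_of_le_of_lt h1 (h4 ▸ h3)
    have hθy : θ ^ y = u ^ y * (M:ℝ) ^ y := by
      rw [hu, div_pow]
      field_simp
    rw [hθy]
    calc Real.exp (-θ) * (u ^ y * (M:ℝ) ^ y) < Real.exp (-θ) * (Real.exp (θ - M) * (M:ℝ) ^ y) := by
          apply mul_lt_mul_of_pos_left _ (Real.exp_pos _)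
          exact mul_lt_mul_of_pos_right key (by positivity)
      _ = Real.exp (-(M:ℝ)) * (M:ℝ) ^ y := by rw [← mul_assoc, ← Real.exp_add]; ring_nf

-- strictly increasing up to m ≤ y
lemma poissonPdf_lt_left {y m : ℕ} (hmy : m ≤ y) {θ : ℝ} (hθ0 : 0 ≤ θ) (hθ : θ < (m : ℝ)) :
    poissonPdf θ y < poissonPdf m y := by
  unfold poissonPdf
  apply div_lt_div_of_pos_right ?_ (by positivity)
  have hmpos : (0:ℝ) < m := lt_of_le_of_lt hθ0 hθ
  have hm1 : 1 ≤ m := by exact_mod_cast hmpos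
  have hy1 : 1 ≤ y := le_trans hm1 hmy
  rcases eq_or_lt_of_le hθ0 with h0 | hθpos
  · rw [← h0, zero_pow (by omega : y ≠ 0), mul_zero]
    positivity
  · set u : ℝ := θ / m with hu
    have hu1 : u < 1 := (div_lt_one hmpos).2 hθ
    have hupos : 0 < u := div_pos hθpos hmpos
    have h2 : u < Real.exp (u - 1) := by
      have := Real.add_one_lt_exp (x := u - 1) (by intro h; apply absurd h; intro h'; linarith)
      linarith
    -- v = 1/u > exp(1-u);  v^m > exp(m-θ); v^y ≥ v^m
    set v : ℝ := (m:ℝ) / θ with hv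
    have hv1 : 1 < v := (one_lt_div hθpos).2 hθ
    have hvu : v = 1 / u := by rw [hv, hu]; field_simp
    have h3 : Real.exp (1 - u) < v := by
      rw [hvu]
      rw [lt_div_iff₀ hupos]
      calc Real.exp (1 - u) * u < Real.exp (1 - u) * Real.exp (u - 1) := by
            exact mul_lt_mul_of_pos_left h2 (Real.exp_pos _)
        _ = 1 := by rw [← Real.exp_add]; ring_nf; exact Real.exp_zero
    have h4 : Real.exp ((m:ℝ) - θ) < v ^ m := by
      have : Real.exp (1 - u) ^ m < v ^ m :=
        pow_lt_pow_left₀ h3 (Real.exp_nonneg _) (by omega)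
      calc Real.exp ((m:ℝ) - θ) = Real.exp (1 - u) ^ m := by
            rw [← Real.exp_nat_mul]
            congr 1
            have : (m:ℝ) ≠ 0 := ne_of_gt hmpos
            field_simp [hu]
            rw [hu, mul_sub, mul_div_assoc', mul_div_cancel_left₀ θ this]; ring
        _ < v ^ m := this
    have h5 : v ^ m ≤ v ^ y := pow_le_pow_right₀ (le_of_lt hv1) hmy
    have key : Real.exp ((m:ℝ) - θ) < v ^ y := lt_of_lt_of_le h4 h5
    have hmy' : (m:ℝ) ^ y = v ^ y * θ ^ y := by
      rw [hv, div_pow]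
      field_simp
    rw [hmy']
    calc Real.exp (-θ) * θ ^ y = Real.exp (-(m:ℝ)) * (Real.exp ((m:ℝ) - θ) * θ ^ y) := by
          rw [← mul_assoc, ← Real.exp_add]; ring_nf
      _ < Real.exp (-(m:ℝ)) * (v ^ y * θ ^ y) := by
          apply mul_lt_mul_of_pos_left _ (Real.exp_pos _)
          exact mul_lt_mul_of_pos_right key (by positivity)

lemma integrable_poissonPdf (y : ℕ) (Q : Measure ℝ) [IsProbabilityMeasure Q]
    (hQ : Q (Set.Iio 0) = 0) : Integrable (fun θ => poissonPdf θ y) Q := by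
  have hae : ∀ᵐ θ ∂Q, 0 ≤ θ := by
    rw [ae_iff]
    convert hQ using 2
    ext θ; simp [Set.mem_Iio]
  apply Integrable.mono' (integrable_const (1:ℝ)) (measurable_poissonPdf y).aestronglyMeasurable
  filter_upwards [hae] with θ hθ
  rw [Real.norm_eq_abs, abs_of_nonneg (poissonPdf_nonneg hθ y)]
  exact poissonPdf_le_one hθ y

lemma mixturePdf_nonneg (y : ℕ) (Q : Measure ℝ) (hQ : Q (Set.Iio 0) = 0) :
    0 ≤ mixturePdf Q y := by
  have hae : ∀ᵐ θ ∂Q, 0 ≤ θ := by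
    rw [ae_iff]
    convert hQ using 2
    ext θ; simp [Set.mem_Iio]
  apply integral_nonneg_of_ae
  filter_upwards [hae] with θ hθ
  exact poissonPdf_nonneg hθ y

lemma setIntegral_le_of_le (Q : Measure ℝ) [IsFiniteMeasure Q] {g : ℝ → ℝ}
    (hg : Integrable g Q) {T : Set ℝ} (hT : MeasurableSet T) {c : ℝ}
    (hle : ∀ θ ∈ T, g θ ≤ c) :
    ∫ θ in T, g θ ∂Q ≤ (Q T).toReal * c := by
  calc ∫ θ in T, g θ ∂Q ≤ ∫ _ in T, c ∂Q :=
        setIntegral_mono_on hg.integrableOn (integrableOn_const (measure_ne_top Q T))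
          hT hle
    _ = (Q T).toReal * c := by rw [setIntegral_const]; simp [Measure.real]

lemma setIntegral_lt_of_lt (Q : Measure ℝ) [IsFiniteMeasure Q] {g : ℝ → ℝ}
    (hg : Integrable g Q) {T : Set ℝ} (hT : MeasurableSet T) {c : ℝ}
    (hlt : ∀ θ ∈ T, g θ < c) (hne : Q T ≠ 0) :
    ∫ θ in T, g θ ∂Q < (Q T).toReal * c := by
  have hic : IntegrableOn (fun _ : ℝ => c) T Q :=
    integrableOn_const (measure_ne_top Q T)
  have h0 : 0 < ∫ θ in T, (c - g θ) ∂Q := by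
    rw [setIntegral_pos_iff_support_of_nonneg_ae]
    · apply lt_of_lt_of_le (lt_of_le_of_ne zero_le (Ne.symm hne))
      apply measure_mono
      intro θ hθ
      exact ⟨by simp [Function.mem_support]; exact sub_ne_zero.2 (ne_of_gt (hlt θ hθ)), hθ⟩
    · filter_upwards [ae_restrict_mem hT] with θ hθ
      exact sub_nonneg.2 (le_of_lt (hlt θ hθ))
    · exact hic.sub hg.integrableOn
  rw [integral_sub hic hg.integrableOn, setIntegral_const] at h0
  simp only [smul_eq_mul, Measure.real] at h0
  linarith

lemma mixture_improve (m M : ℕ) (hmM : m ≤ M) (Q : Measure ℝ) [hQp : IsProbabilityMeasure Q]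
    (hQ0 : Q (Set.Iio 0) = 0) (hpos : 0 < Q ((Set.Icc (m:ℝ) (M:ℝ))ᶜ)) :
    ∃ Q' : Measure ℝ, IsProbabilityMeasure Q' ∧ Q' ((Set.Icc (m:ℝ) (M:ℝ))ᶜ) = 0 ∧
      ∀ y : ℕ, m ≤ y → y ≤ M → mixturePdf Q y < mixturePdf Q' y := by
  have hmMr : (m:ℝ) ≤ (M:ℝ) := by exact_mod_cast hmM
  set A : Set ℝ := Set.Icc (m:ℝ) (M:ℝ) with hA
  set T1 : Set ℝ := Set.Ico (0:ℝ) (m:ℝ) with hT1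
  set T2 : Set ℝ := Set.Ioi (M:ℝ) with hT2
  have hAms : MeasurableSet A := measurableSet_Icc
  have hT1ms : MeasurableSet T1 := measurableSet_Ico
  have hT2ms : MeasurableSet T2 := measurableSet_Ioi
  set Q' : Measure ℝ :=
    Q.restrict A + Q T1 • Measure.dirac (m:ℝ) + Q T2 • Measure.dirac (M:ℝ) with hQ'
  -- set algebra
  have hIci : T1 ∪ (A ∪ T2) = Set.Ici (0:ℝ) := by
    rw [hA, hT1, hT2, Set.Icc_union_Ioi_eq_Ici hmMr, Set.Ico_union_Ici_eq_Ici (by positivity)]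
  have hd12 : Disjoint T1 (A ∪ T2) := by
    rw [Set.disjoint_left]
    rintro x ⟨_, hx2⟩ (⟨hx3, _⟩ | hx3)
    · exact absurd hx3 (not_le.2 hx2)
    · exact absurd (lt_of_lt_of_le hx2 hmMr) (not_lt.2 (le_of_lt hx3))
  have hdAT2 : Disjoint A T2 := by
    rw [Set.disjoint_left]
    rintro x ⟨_, hx2⟩ hx3
    exact absurd hx3 (not_lt.2 hx2)
  have hQIci : Q (Set.Ici (0:ℝ)) = 1 := by
    have : (Set.Iio (0:ℝ))ᶜ = Set.Ici 0 := Set.compl_Iio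
    rw [← this, prob_compl_eq_one_sub measurableSet_Iio, hQ0]; simp
  have hsplit : Q T1 + (Q A + Q T2) = 1 := by
    rw [← measure_union hdAT2 hT2ms, ← measure_union hd12 (hAms.union hT2ms), hIci, hQIci]
  -- Q' is a probability measure
  have hQ'prob : IsProbabilityMeasure Q' := by
    constructor
    rw [hQ']
    simp only [Measure.add_apply, Measure.smul_apply, Measure.restrict_apply MeasurableSet.univ,
      Set.univ_inter, Measure.dirac_apply_of_mem (Set.mem_univ _), smul_eq_mul, mul_one]
    calc Q A + Q T1 + Q T2 = Q T1 + (Q A + Q T2) := by ring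
      _ = 1 := hsplit
  -- Q' vanishes outside A
  have hmemA_m : (m:ℝ) ∈ A := Set.left_mem_Icc.2 hmMr
  have hmemA_M : (M:ℝ) ∈ A := Set.right_mem_Icc.2 hmMr
  have hQ'Ac : Q' Aᶜ = 0 := by
    rw [hQ']
    simp only [Measure.add_apply, Measure.smul_apply,
      Measure.restrict_apply hAms.compl, smul_eq_mul]
    rw [Set.compl_inter_self, Measure.dirac_apply' _ hAms.compl,
      Measure.dirac_apply' _ hAms.compl]
    rw [Set.indicator_of_notMem (by simpa using hmemA_m),
      Set.indicator_of_notMem (by simpa using hmemA_M)]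
    simp
  refine ⟨Q', hQ'prob, hQ'Ac, ?_⟩
  -- the pointwise improvement
  intro y hmy hyM
  set g : ℝ → ℝ := fun θ => poissonPdf θ y with hg
  have hgint : Integrable g Q := integrable_poissonPdf y Q hQ0
  have hdints : ∀ a : ℝ, 0 ≤ a → Integrable g (Measure.dirac a) := by
    intro a ha
    apply integrable_poissonPdf
    rw [Measure.dirac_apply' _ measurableSet_Iio, Set.indicator_of_notMem (by simpa using ha)]
  -- integral wrt Q'
  have hQ'int : mixturePdf Q' y
      = (∫ θ in A, g θ ∂Q) + (Q T1).toReal * g m + (Q T2).toReal * g M := by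
    show (∫ θ, g θ ∂Q') = _
    rw [hQ']
    rw [integral_add_measure (by
          exact (hgint.restrict.add_measure
            ((hdints m (by positivity)).smul_measure (measure_ne_top Q T1))))
        ((hdints M (by positivity)).smul_measure (measure_ne_top Q T2)),
      integral_add_measure hgint.restrict
        ((hdints m (by positivity)).smul_measure (measure_ne_top Q T1)),
      integral_smul_measure, integral_smul_measure, integral_dirac, integral_dirac]
    simp [smul_eq_mul]
  -- integral wrt Q
  have hQint : mixturePdf Q y
      = (∫ θ in T1, g θ ∂Q) + ((∫ θ in A, g θ ∂Q) + (∫ θ in T2, g θ ∂Q)) := by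
    show (∫ θ, g θ ∂Q) = _
    have h1 : (∫ θ, g θ ∂Q) = ∫ θ in Set.Ici (0:ℝ), g θ ∂Q := by
      have hz : Q.restrict (Set.Ici (0:ℝ))ᶜ = 0 := by
        rw [Measure.restrict_eq_zero, Set.compl_Ici]
        exact hQ0
      rw [← integral_add_compl measurableSet_Ici hgint, hz, integral_zero_measure, add_zero]
    rw [h1, ← hIci,
      setIntegral_union hd12 (hAms.union hT2ms) hgint.integrableOn hgint.integrableOn,
      setIntegral_union hdAT2 hT2ms hgint.integrableOn hgint.integrableOn]
  -- pointwise bounds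
  have hb1 : ∀ θ ∈ T1, g θ < g m := fun θ hθ => poissonPdf_lt_left hmy hθ.1 hθ.2
  have hb2 : ∀ θ ∈ T2, g θ < g M := fun θ hθ => poissonPdf_lt_right hyM hθ
  have hle1 : ∫ θ in T1, g θ ∂Q ≤ (Q T1).toReal * g m :=
    setIntegral_le_of_le Q hgint hT1ms (fun θ hθ => le_of_lt (hb1 θ hθ))
  have hle2 : ∫ θ in T2, g θ ∂Q ≤ (Q T2).toReal * g M :=
    setIntegral_le_of_le Q hgint hT2ms (fun θ hθ => le_of_lt (hb2 θ hθ))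
  -- one of the outside pieces has positive mass
  have hout : Q T1 ≠ 0 ∨ Q T2 ≠ 0 := by
    by_contra h
    push_neg at h
    obtain ⟨h1, h2⟩ := h
    have hsub : Aᶜ ⊆ Set.Iio 0 ∪ (T1 ∪ T2) := by
      intro x hx
      rcases lt_or_ge x 0 with h | h
      · exact Or.inl h
      rcases lt_or_ge x (m:ℝ) with h' | h'
      · exact Or.inr (Or.inl ⟨h, h'⟩)
      rcases le_or_gt x (M:ℝ) with h'' | h''
      · exact absurd ⟨h', h''⟩ hx
      · exact Or.inr (Or.inr h'')
    have : Q Aᶜ = 0 := by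
      apply measure_mono_null hsub
      apply measure_union_null hQ0
      exact measure_union_null h1 h2
    exact absurd this (ne_of_gt hpos)
  rw [hQint, hQ'int]
  rcases hout with h | h
  · have := setIntegral_lt_of_lt Q hgint hT1ms hb1 h
    linarith
  · have := setIntegral_lt_of_lt Q hgint hT2ms hb2 h
    linarith


/-- for a generalized distance `D(q₁‖q₂) = t(q₁) + ∑_y ℓ(q₁(y), q₂(y))`
with `b ↦ ℓ(a,b)` strictly decreasing on `[0,∞)` for `a > 0` and `ℓ(0,·) = 0`, and a
pmf `p` with finite support `s` (min `y_min`, max `y_max`): any prior `Q` on `[0,∞)`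
with positive mass outside `[y_min, y_max]` is strictly improved by some prior `Q̃`
supported on `[y_min, y_max]`; hence every minimizer of `Q ↦ D(p‖f_Q)` is supported
on `[y_min, y_max]`. -/
theorem minimizer_supported_on_data_range
    (p : ℕ → ℝ) (s : Finset ℕ) (hsne : s.Nonempty)
    (hp0 : ∀ y, 0 ≤ p y) (hp1 : HasSum p 1) (hps : ∀ y, 0 < p y ↔ y ∈ s)
    (t : (ℕ → ℝ) → ℝ) (ℓ : ℝ → ℝ → ℝ)
    (hℓanti : ∀ a : ℝ, 0 < a → StrictAntiOn (ℓ a) (Set.Ici 0))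
    (hℓzero : ∀ b : ℝ, 0 ≤ b → ℓ 0 b = 0)
    (D : (ℕ → ℝ) → (ℕ → ℝ) → ℝ)
    (hD : ∀ q₁ q₂ : ℕ → ℝ, D q₁ q₂ = t q₁ + ∑' y : ℕ, ℓ (q₁ y) (q₂ y)) :
    (∀ Q : Measure ℝ, IsProbabilityMeasure Q → Q (Set.Iio 0) = 0 →
      0 < Q ((Set.Icc (s.min' hsne : ℝ) (s.max' hsne))ᶜ) →
      ∃ Q' : Measure ℝ, IsProbabilityMeasure Q' ∧
        Q' ((Set.Icc (s.min' hsne : ℝ) (s.max' hsne))ᶜ) = 0 ∧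
        D p (mixturePdf Q') < D p (mixturePdf Q)) ∧
    (∀ Qstar : Measure ℝ, IsProbabilityMeasure Qstar → Qstar (Set.Iio 0) = 0 →
      (∀ Q : Measure ℝ, IsProbabilityMeasure Q → Q (Set.Iio 0) = 0 →
        D p (mixturePdf Qstar) ≤ D p (mixturePdf Q)) →
      Qstar ((Set.Icc (s.min' hsne : ℝ) (s.max' hsne))ᶜ) = 0) := by
  have hIio_sub : Set.Iio (0:ℝ) ⊆ (Set.Icc (s.min' hsne : ℝ) (s.max' hsne))ᶜ := by
    intro x hx
    simp only [Set.mem_compl_iff, Set.mem_Icc, not_and, not_le]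
    intro h
    exact absurd (le_trans (Nat.cast_nonneg _) h) (not_le.2 hx)
  have hDlt : ∀ Q Q' : Measure ℝ, Q (Set.Iio 0) = 0 → Q' (Set.Iio 0) = 0 →
      (∀ y ∈ s, mixturePdf Q y < mixturePdf Q' y) →
      D p (mixturePdf Q') < D p (mixturePdf Q) := by
    intro Q Q' hQ0 hQ'0 hcomp
    rw [hD, hD]
    have hz : ∀ R : Measure ℝ, R (Set.Iio 0) = 0 → ∀ y, y ∉ s →
        ℓ (p y) (mixturePdf R y) = 0 := by
      intro R hR y hy
      have hpy : p y = 0 := by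
        by_contra h
        exact hy ((hps y).1 (lt_of_le_of_ne (hp0 y) (Ne.symm h)))
      rw [hpy]
      exact hℓzero _ (mixturePdf_nonneg y R hR)
    rw [tsum_eq_sum (hz Q' hQ'0), tsum_eq_sum (hz Q hQ0)]
    apply add_lt_add_right
    apply Finset.sum_lt_sum_of_nonempty hsne
    intro y hy
    exact hℓanti (p y) ((hps y).2 hy) (mixturePdf_nonneg y Q hQ0)
      (mixturePdf_nonneg y Q' hQ'0) (hcomp y hy)
  have hmM : s.min' hsne ≤ s.max' hsne := s.min'_le _ (s.max'_mem hsne)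
  have part1 : ∀ Q : Measure ℝ, IsProbabilityMeasure Q → Q (Set.Iio 0) = 0 →
      0 < Q ((Set.Icc (s.min' hsne : ℝ) (s.max' hsne))ᶜ) →
      ∃ Q' : Measure ℝ, IsProbabilityMeasure Q' ∧
        Q' ((Set.Icc (s.min' hsne : ℝ) (s.max' hsne))ᶜ) = 0 ∧
        D p (mixturePdf Q') < D p (mixturePdf Q) := by
    intro Q hQ hQ0 hpos
    obtain ⟨Q', hQ'p, hQ'Ac, himp⟩ := mixture_improve (s.min' hsne) (s.max' hsne) hmM Q hQ0 hpos
    refine ⟨Q', hQ'p, hQ'Ac, ?_⟩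
    have hQ'0 : Q' (Set.Iio 0) = 0 := measure_mono_null hIio_sub hQ'Ac
    exact hDlt Q Q' hQ0 hQ'0 fun y hy => himp y (s.min'_le y hy) (s.le_max' y hy)
  refine ⟨part1, ?_⟩
  intro Qstar hprob h0 hmin
  by_contra hne
  have hpos : 0 < Qstar ((Set.Icc (s.min' hsne : ℝ) (s.max' hsne))ᶜ) :=
    lt_of_le_of_ne zero_le (Ne.symm hne)
  obtain ⟨Q', hQ'p, hQ'Ac, hlt⟩ := part1 Qstar hprob h0 hpos
  have hQ'0 : Q' (Set.Iio 0) = 0 := measure_mono_null hIio_sub hQ'Ac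
  exact absurd (hmin Q' hQ'p hQ'0) (not_le.2 hlt)
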